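/- Let G be a countable amenable group acting by measure-preserving transformations on a probability space (X, μ), with Følner sequence {F_n}. If the amenable measure entropy h(X, μ, G) is zero, then for every finite-entropy measurable partition ξ with cut semimetric ρ_ξ and every ε > 0, one has ℍ_ε(X, μ, G^n_{av} ρ_ξ) = o(|F_n|), where G^n_{av}ρ(x,y) = (1/|F_n|) Σ_{g∈F_n} ρ(gx, gy). -/

import Mathlib

open MeasureTheory Filter Pointwise

section EpsEntropy

variable {α : Type*} [MeasurableSpace α]

/-- `k` works for an `ε`-cover: `X = X₀ ∪ … ∪ X_k` with `μ X₀ < ε` and `diam_ρ X_i < ε` for `i ≥ 1`. -/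
def IsEntCover (μ : Measure α) (ρ : α → α → ℝ) (ε : ℝ) (k : ℕ) : Prop :=
  ∃ A : Fin (k + 1) → Set α, (∀ i, MeasurableSet (A i)) ∧ (⋃ i, A i) = Set.univ ∧
    μ (A 0) < ENNReal.ofReal ε ∧
    ∀ i : Fin (k + 1), i ≠ 0 → ∀ x ∈ A i, ∀ y ∈ A i, ρ x y < ε

/-- The ε-entropy `ℍ_ε(X, μ, ρ) = log₂ k` for the minimal admissible `k`. -/
noncomputable def epsEntropy (μ : Measure α) (ρ : α → α → ℝ) (ε : ℝ) : ℝ :=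
  Real.logb 2 ((sInf {k : ℕ | 0 < k ∧ IsEntCover μ ρ ε k} : ℕ) : ℝ)

/-- A semimetric is admissible iff all of its `ε`-entropies are finite. -/
def Admissible (μ : Measure α) (ρ : α → α → ℝ) : Prop :=
  ∀ ε : ℝ, 0 < ε → ∃ k : ℕ, 0 < k ∧ IsEntCover μ ρ ε k

end EpsEntropy


section Aux

variable {X : Type*} [MeasurableSpace X] (μ : Measure X) [IsProbabilityMeasure μ]

/-- Information function of a countable partition given by `Q`. -/
noncomputable def atomInfo (Q : X → ℕ) (x : X) : ℝ :=
  -Real.logb 2 (μ (Q ⁻¹' {Q x})).toReal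

lemma meas_atom_le_one (Q : X → ℕ) (x : X) : (μ (Q ⁻¹' {Q x})).toReal ≤ 1 := by
  have h := prob_le_one (μ := μ) (s := Q ⁻¹' {Q x})
  simpa using ENNReal.toReal_mono ENNReal.one_ne_top h

lemma atomInfo_nonneg (Q : X → ℕ) (x : X) : 0 ≤ atomInfo μ Q x := by
  have := Real.logb_nonpos (b := 2) one_lt_two ENNReal.toReal_nonneg (meas_atom_le_one μ Q x)
  simpa [atomInfo] using this

lemma measurable_atomInfo {Q : X → ℕ} (hQ : Measurable Q) : Measurable (atomInfo μ Q) := by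
  have : atomInfo μ Q = (fun i : ℕ => -Real.logb 2 (μ (Q ⁻¹' {i})).toReal) ∘ Q := rfl
  rw [this]
  exact measurable_from_top.comp hQ

lemma tsum_meas_atoms (Q : X → ℕ) (hQ : Measurable Q) : ∑' i : ℕ, μ (Q ⁻¹' {i}) = 1 := by
  have hdisj : Pairwise (Function.onFun Disjoint fun i : ℕ => Q ⁻¹' {i}) := by
    intro i j hij
    exact Set.disjoint_left.2 fun x hx hx' => hij (hx.symm.trans hx')
  rw [← measure_iUnion (μ := μ) hdisj fun i => hQ (measurableSet_singleton i)]
  have : (⋃ i : ℕ, Q ⁻¹' {i}) = Set.univ := by ext x; simp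
  rw [this, measure_univ]

lemma lintegral_comp_nat {Q : X → ℕ} (hQ : Measurable Q) (φ : ℕ → ENNReal) :
    ∫⁻ x, φ (Q x) ∂μ = ∑' i : ℕ, φ i * μ (Q ⁻¹' {i}) := by
  rw [← lintegral_map (f := φ) measurable_from_top hQ, lintegral_countable']
  congr 1
  ext i
  rw [Measure.map_apply hQ (measurableSet_singleton i)]

lemma null_atoms (Q : X → ℕ) (hQ : Measurable Q) :
    μ {x | μ (Q ⁻¹' {Q x}) = 0} = 0 := by
  have hset : {x | μ (Q ⁻¹' {Q x}) = 0} = ⋃ i ∈ {i : ℕ | μ (Q ⁻¹' {i}) = 0}, Q ⁻¹' {i} := by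
    ext x; simp [Set.mem_iUnion]
  rw [hset]
  rw [measure_biUnion_null_iff (Set.to_countable _)]
  exact fun i hi => hi

lemma pair_preimage (Q R : X → ℕ) (i : ℕ) :
    (fun y => Nat.pair (Q y) (R y)) ⁻¹' {i}
      = Q ⁻¹' {(Nat.unpair i).1} ∩ R ⁻¹' {(Nat.unpair i).2} := by
  ext y
  simp only [Set.mem_preimage, Set.mem_singleton_iff, Set.mem_inter_iff]
  constructor
  · rintro rfl; simp
  · rintro ⟨h1, h2⟩
    have : (Nat.unpair i).1.pair (Nat.unpair i).2 = i := Nat.pair_unpair i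
    rw [h1, h2, this]

lemma pair_atom (Q R : X → ℕ) (x : X) :
    (fun y => Nat.pair (Q y) (R y)) ⁻¹' {Nat.pair (Q x) (R x)}
      = Q ⁻¹' {Q x} ∩ R ⁻¹' {R x} := by
  rw [pair_preimage]
  simp

lemma measurable_pair {Q R : X → ℕ} (hQ : Measurable Q) (hR : Measurable R) :
    Measurable fun y => Nat.pair (Q y) (R y) := by
  apply measurable_to_countable'
  intro i
  rw [pair_preimage]
  exact (hQ (measurableSet_singleton _)).inter (hR (measurableSet_singleton _))

lemma integrable_atomInfo_pair {Q R : X → ℕ} (hQ : Measurable Q) (hR : Measurable R)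
    (hQi : Integrable (atomInfo μ Q) μ) (hRi : Integrable (atomInfo μ R) μ) :
    Integrable (atomInfo μ fun x => Nat.pair (Q x) (R x)) μ := by
  set S : X → ℕ := fun x => Nat.pair (Q x) (R x) with hSdef
  have hS : Measurable S := measurable_pair hQ hR
  -- the auxiliary function h
  set h : X → ℝ := fun x =>
    ((μ (Q ⁻¹' {Q x})).toReal * (μ (R ⁻¹' {R x})).toReal / (μ (S ⁻¹' {S x})).toReal)
      / Real.log 2 with hhdef
  have hmQ : Measurable fun x => (μ (Q ⁻¹' {Q x})).toReal :=
    (measurable_from_top (f := fun i : ℕ => (μ (Q ⁻¹' {i})).toReal)).comp hQ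
  have hmR : Measurable fun x => (μ (R ⁻¹' {R x})).toReal :=
    (measurable_from_top (f := fun i : ℕ => (μ (R ⁻¹' {i})).toReal)).comp hR
  have hmS : Measurable fun x => (μ (S ⁻¹' {S x})).toReal :=
    (measurable_from_top (f := fun i : ℕ => (μ (S ⁻¹' {i})).toReal)).comp hS
  have hmh : Measurable h := ((hmQ.mul hmR).div hmS).div measurable_const
  have hh_nonneg : ∀ x, 0 ≤ h x := by
    intro x
    apply div_nonneg _ (Real.log_nonneg one_le_two)
    exact div_nonneg (mul_nonneg ENNReal.toReal_nonneg ENNReal.toReal_nonneg)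
      ENNReal.toReal_nonneg
  -- h has finite integral
  have hint : Integrable h μ := by
    refine ⟨hmh.aestronglyMeasurable, ?_⟩
    rw [hasFiniteIntegral_iff_norm]
    have heq : ∀ x, ENNReal.ofReal ‖h x‖ = ENNReal.ofReal (h x) := fun x => by
      rw [Real.norm_of_nonneg (hh_nonneg x)]
    simp_rw [heq]
    have hcomp : ∀ x, ENNReal.ofReal (h x) =
        (fun i : ℕ => ENNReal.ofReal
          (((μ (Q ⁻¹' {(Nat.unpair i).1})).toReal * (μ (R ⁻¹' {(Nat.unpair i).2})).toReal
            / (μ (S ⁻¹' {i})).toReal) / Real.log 2)) (S x) := by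
      intro x
      have h1 : (Nat.unpair (S x)).1 = Q x := by simp [hSdef]
      have h2 : (Nat.unpair (S x)).2 = R x := by simp [hSdef]
      simp only [h1, h2]; rfl
    calc ∫⁻ x, ENNReal.ofReal (h x) ∂μ
        = ∑' i : ℕ, ENNReal.ofReal
            (((μ (Q ⁻¹' {(Nat.unpair i).1})).toReal * (μ (R ⁻¹' {(Nat.unpair i).2})).toReal
              / (μ (S ⁻¹' {i})).toReal) / Real.log 2) * μ (S ⁻¹' {i}) := by
          simp_rw [hcomp]
          exact lintegral_comp_nat μ hS (fun i : ℕ => ENNReal.ofReal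
            (((μ (Q ⁻¹' {(Nat.unpair i).1})).toReal * (μ (R ⁻¹' {(Nat.unpair i).2})).toReal
              / (μ (S ⁻¹' {i})).toReal) / Real.log 2))
      _ ≤ ∑' i : ℕ, μ (Q ⁻¹' {(Nat.unpair i).1}) * μ (R ⁻¹' {(Nat.unpair i).2})
            / ENNReal.ofReal (Real.log 2) := by
          apply ENNReal.tsum_le_tsum
          intro i
          rcases eq_or_ne (μ (S ⁻¹' {i})) 0 with h0 | h0
          · rw [h0, mul_zero]; exact zero_le
          · have hfin : μ (S ⁻¹' {i}) ≠ ⊤ := measure_ne_top μ _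
            have hpos : 0 < (μ (S ⁻¹' {i})).toReal := ENNReal.toReal_pos h0 hfin
            have harith : (((μ (Q ⁻¹' {(Nat.unpair i).1})).toReal
                * (μ (R ⁻¹' {(Nat.unpair i).2})).toReal / (μ (S ⁻¹' {i})).toReal)
                  / Real.log 2) * (μ (S ⁻¹' {i})).toReal
                = ((μ (Q ⁻¹' {(Nat.unpair i).1})).toReal
                    * (μ (R ⁻¹' {(Nat.unpair i).2})).toReal) / Real.log 2 := by
              field_simp
            refine le_of_eq ?_
            calc ENNReal.ofReal (((μ (Q ⁻¹' {(Nat.unpair i).1})).toReal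
                    * (μ (R ⁻¹' {(Nat.unpair i).2})).toReal / (μ (S ⁻¹' {i})).toReal)
                      / Real.log 2) * μ (S ⁻¹' {i})
                = ENNReal.ofReal ((((μ (Q ⁻¹' {(Nat.unpair i).1})).toReal
                    * (μ (R ⁻¹' {(Nat.unpair i).2})).toReal / (μ (S ⁻¹' {i})).toReal)
                      / Real.log 2) * (μ (S ⁻¹' {i})).toReal) := by
                  rw [ENNReal.ofReal_mul (by positivity), ENNReal.ofReal_toReal hfin]
              _ = ENNReal.ofReal (((μ (Q ⁻¹' {(Nat.unpair i).1})).toReal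
                    * (μ (R ⁻¹' {(Nat.unpair i).2})).toReal) / Real.log 2) := by rw [harith]
              _ = ENNReal.ofReal ((μ (Q ⁻¹' {(Nat.unpair i).1})).toReal
                    * (μ (R ⁻¹' {(Nat.unpair i).2})).toReal) / ENNReal.ofReal (Real.log 2) :=
                  ENNReal.ofReal_div_of_pos (Real.log_pos one_lt_two)
              _ = μ (Q ⁻¹' {(Nat.unpair i).1}) * μ (R ⁻¹' {(Nat.unpair i).2})
                    / ENNReal.ofReal (Real.log 2) := by
                  rw [ENNReal.ofReal_mul ENNReal.toReal_nonneg,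
                    ENNReal.ofReal_toReal (measure_ne_top μ _),
                    ENNReal.ofReal_toReal (measure_ne_top μ _)]
      _ = (∑' i : ℕ, μ (Q ⁻¹' {(Nat.unpair i).1}) * μ (R ⁻¹' {(Nat.unpair i).2}))
            / ENNReal.ofReal (Real.log 2) := by
          simp_rw [div_eq_mul_inv]
          exact ENNReal.tsum_mul_right
      _ = (∑' p : ℕ × ℕ, μ (Q ⁻¹' {p.1}) * μ (R ⁻¹' {p.2}))
            / ENNReal.ofReal (Real.log 2) := by
          congr 1
          rw [← Equiv.tsum_eq Nat.pairEquiv.symm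
            (fun p : ℕ × ℕ => μ (Q ⁻¹' {p.1}) * μ (R ⁻¹' {p.2}))]
          rfl
      _ < ⊤ := by
          have hprod : (∑' p : ℕ × ℕ, μ (Q ⁻¹' {p.1}) * μ (R ⁻¹' {p.2})) = 1 := by
            rw [ENNReal.tsum_prod']
            simp_rw [ENNReal.tsum_mul_left, tsum_meas_atoms μ R hR, mul_one]
            exact tsum_meas_atoms μ Q hQ
          rw [hprod]
          exact ENNReal.div_lt_top (by simp)
            (by simp [Real.log_pos one_lt_two, (Real.log_pos one_lt_two).ne'])
  -- pointwise bound a.e.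
  have hae : ∀ᵐ x ∂μ, ‖atomInfo μ S x‖ ≤ atomInfo μ Q x + atomInfo μ R x + h x := by
    have h1 : ∀ᵐ x ∂μ, μ (S ⁻¹' {S x}) ≠ 0 := by
      rw [ae_iff]
      simpa using null_atoms μ S hS
    filter_upwards [h1] with x hx
    have hpfin : μ (S ⁻¹' {S x}) ≠ ⊤ := measure_ne_top μ _
    have hp : 0 < (μ (S ⁻¹' {S x})).toReal := ENNReal.toReal_pos hx hpfin
    have hsub : S ⁻¹' {S x} = Q ⁻¹' {Q x} ∩ R ⁻¹' {R x} := pair_atom Q R x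
    have haq : 0 < (μ (Q ⁻¹' {Q x})).toReal := by
      refine ENNReal.toReal_pos (fun hz => hx ?_) (measure_ne_top μ _)
      exact measure_mono_null (by rw [hsub]; exact Set.inter_subset_left) hz
    have hbr : 0 < (μ (R ⁻¹' {R x})).toReal := by
      refine ENNReal.toReal_pos (fun hz => hx ?_) (measure_ne_top μ _)
      exact measure_mono_null (by rw [hsub]; exact Set.inter_subset_right) hz
    rw [Real.norm_of_nonneg (atomInfo_nonneg μ S x)]
    set a := (μ (Q ⁻¹' {Q x})).toReal
    set b := (μ (R ⁻¹' {R x})).toReal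
    set p := (μ (S ⁻¹' {S x})).toReal
    have hlog : Real.logb 2 (a * b / p) ≤ (a * b / p) / Real.log 2 := by
      rw [Real.logb]
      have := Real.log_le_sub_one_of_pos (x := a * b / p) (by positivity)
      have h2 : a * b / p - 1 ≤ a * b / p := by linarith
      have hl2 : 0 < Real.log 2 := Real.log_pos one_lt_two
      gcongr
      linarith
    have hexp : Real.logb 2 (a * b / p) = Real.logb 2 a + Real.logb 2 b - Real.logb 2 p := by
      rw [Real.logb_div (by positivity) hp.ne', Real.logb_mul haq.ne' hbr.ne']
    have hh : h x = (a * b / p) / Real.log 2 := rfl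
    simp only [atomInfo, hh]
    rw [hexp] at hlog
    linarith
  have := Integrable.mono' ((hQi.add hRi).add hint)
    ((measurable_atomInfo μ hS).aestronglyMeasurable) hae
  exact this

lemma exists_code {G : Type*} [Group G] [MulAction G X]
    (hmp : ∀ g : G, MeasurePreserving (fun x : X => g • x) μ μ)
    {P : X → ℕ} (hP : Measurable P)
    (hPent : Integrable (fun x => Real.logb 2 (μ (P ⁻¹' {P x})).toReal) μ)
    (s : Finset G) :
    ∃ T : X → ℕ, Measurable T ∧ Integrable (atomInfo μ T) μ ∧
      ∀ x, T ⁻¹' {T x} = {y | ∀ g ∈ s, P (g • y) = P (g • x)} := by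
  classical
  induction s using Finset.induction_on with
  | empty =>
      refine ⟨fun _ => 0, measurable_const, ?_, ?_⟩
      · have hz : atomInfo μ (fun _ : X => (0:ℕ)) = fun _ => 0 := by
          funext x
          simp [atomInfo]
        rw [hz]
        exact integrable_zero _ _ _
      · intro x; ext y; simp
  | @insert a s' ha ih =>
      obtain ⟨T, hT, hTi, hTa⟩ := ih
      set Q : X → ℕ := fun x => P (a • x) with hQdef
      have hQ : Measurable Q := hP.comp (hmp a).measurable
      have hQatom : ∀ x, Q ⁻¹' {Q x} = (fun y => a • y) ⁻¹' (P ⁻¹' {P (a • x)}) :=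
        fun x => rfl
      have hmP : Measurable (fun x => -Real.logb 2 (μ (P ⁻¹' {P x})).toReal) :=
        (measurable_from_top (f := fun i : ℕ => -Real.logb 2 (μ (P ⁻¹' {i})).toReal)).comp hP
      have hQinfo : atomInfo μ Q
          = (fun x => -Real.logb 2 (μ (P ⁻¹' {P x})).toReal) ∘ (fun y => a • y) := by
        funext x
        simp only [atomInfo, Function.comp_apply]
        rw [hQatom,
          (hmp a).measure_preimage (hP (measurableSet_singleton _)).nullMeasurableSet]
      have hQi : Integrable (atomInfo μ Q) μ := by
        rw [hQinfo]
        exact ((hmp a).integrable_comp hmP.aestronglyMeasurable).2 hPent.neg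
      refine ⟨fun x => Nat.pair (Q x) (T x), measurable_pair hQ hT,
        integrable_atomInfo_pair μ hQ hT hQi hTi, ?_⟩
      intro x
      rw [pair_atom]
      ext y
      simp only [Set.mem_inter_iff, Set.mem_setOf_eq, hTa x, Finset.forall_mem_insert]
      rw [hQatom]
      simp only [Set.mem_preimage, Set.mem_singleton_iff]

end Aux

lemma isEntCover_of_code {X : Type*} [MeasurableSpace X] (μ : Measure X)
    [IsProbabilityMeasure μ] {T : X → ℕ} (hT : Measurable T) {ρ : X → X → ℝ} {ε t : ℝ}
    (hρ : ∀ x y : X, T x = T y → ρ x y < ε)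
    (hsmall : μ {x | μ (T ⁻¹' {T x}) < ENNReal.ofReal ((2:ℝ) ^ (-t))} < ENNReal.ofReal ε)
    (ht : 0 ≤ t) :
    ∃ k : ℕ, 0 < k ∧ IsEntCover μ ρ ε k ∧ (k : ℝ) ≤ (2:ℝ) ^ t := by
  classical
  set θ : ENNReal := ENNReal.ofReal ((2:ℝ) ^ (-t)) with hθdef
  have hθpos : 0 < θ := ENNReal.ofReal_pos.2 (Real.rpow_pos_of_pos two_pos _)
  have hAs : ∀ i : ℕ, MeasurableSet (T ⁻¹' {i}) := fun i => hT (measurableSet_singleton i)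
  have hdisj : Pairwise (Function.onFun Disjoint fun i : ℕ => T ⁻¹' {i}) := by
    intro i j hij
    exact Set.disjoint_left.2 fun x hx hx' => hij (hx.symm.trans hx')
  have hfin : Set.Finite {i : ℕ | θ ≤ μ (T ⁻¹' {i})} :=
    MeasureTheory.Measure.finite_const_le_meas_of_disjoint_iUnion μ hθpos hAs hdisj
      (measure_ne_top μ _)
  set BF : Finset ℕ := hfin.toFinset with hBFdef
  have hcard : (BF.card : ENNReal) * θ ≤ 1 := by
    have h1 : BF.card • θ ≤ ∑ i ∈ BF, μ (T ⁻¹' {i}) :=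
      Finset.card_nsmul_le_sum BF _ θ (fun i hi => (hfin.mem_toFinset.1 hi))
    have h2 : ∑ i ∈ BF, μ (T ⁻¹' {i}) = μ (⋃ i ∈ BF, T ⁻¹' {i}) :=
      (measure_biUnion_finset (hdisj.set_pairwise _) (fun i _ => hAs i)).symm
    calc (BF.card : ENNReal) * θ = BF.card • θ := (nsmul_eq_mul _ _).symm
      _ ≤ ∑ i ∈ BF, μ (T ⁻¹' {i}) := h1
      _ = μ (⋃ i ∈ BF, T ⁻¹' {i}) := h2
      _ ≤ 1 := prob_le_one
  have h2t : (0:ℝ) < (2:ℝ) ^ t := Real.rpow_pos_of_pos two_pos t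
  have hcardR : (BF.card : ℝ) ≤ (2:ℝ) ^ t := by
    have h3 := ENNReal.toReal_mono ENNReal.one_ne_top hcard
    rw [ENNReal.toReal_mul, ENNReal.toReal_ofReal (Real.rpow_nonneg two_pos.le _)] at h3
    simp only [ENNReal.toReal_natCast, ENNReal.toReal_one] at h3
    rw [Real.rpow_neg two_pos.le] at h3
    rw [← one_mul ((2:ℝ) ^ t)]
    exact (mul_inv_le_iff₀ h2t).1 h3
  set k : ℕ := max BF.card 1 with hkdef
  have hkR : (k : ℝ) ≤ (2:ℝ) ^ t := by
    rcases max_cases BF.card 1 with ⟨h, _⟩ | ⟨h, _⟩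
    · rw [hkdef, h]; exact hcardR
    · rw [hkdef, h]
      have : (2:ℝ) ^ (0:ℝ) ≤ (2:ℝ) ^ t := Real.rpow_le_rpow_of_exponent_le one_le_two ht
      simpa using this
  refine ⟨k, lt_of_lt_of_le one_pos (le_max_right _ _), ?_, hkR⟩
  set l : List ℕ := BF.toList with hldef
  have hlen : l.length = BF.card := Finset.length_toList BF
  refine ⟨fun i => if i = 0 then {x | μ (T ⁻¹' {T x}) < θ}
    else T ⁻¹' {l.getD ((i : ℕ) - 1) 0}, ?_, ?_, ?_, ?_⟩
  · intro i
    dsimp only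
    by_cases hi : i = 0
    · rw [if_pos hi]
      have : {x | μ (T ⁻¹' {T x}) < θ} = T ⁻¹' {c | μ (T ⁻¹' {c}) < θ} := by
        ext x; simp
      rw [this]
      exact hT MeasurableSet.of_discrete
    · rw [if_neg hi]
      exact hAs _
  · ext x
    simp only [Set.mem_iUnion, Set.mem_univ, iff_true]
    by_cases hx : μ (T ⁻¹' {T x}) < θ
    · exact ⟨0, by simp [hx]⟩
    · have hmem : T x ∈ BF := hfin.mem_toFinset.2 (not_lt.1 hx)
      have hmeml : T x ∈ l := by rw [hldef]; exact Finset.mem_toList.2 hmem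
      obtain ⟨j, hj, hget⟩ := List.mem_iff_getElem.1 hmeml
      have hjk : j + 1 < k + 1 := by
        have : j < BF.card := hlen ▸ hj
        omega
      refine ⟨⟨j + 1, hjk⟩, ?_⟩
      dsimp only
      have hne : (⟨j + 1, hjk⟩ : Fin (k + 1)) ≠ 0 := by
        intro hcon
        have := congrArg Fin.val hcon
        simp at this
      rw [if_neg hne]
      simp only [Set.mem_preimage, Set.mem_singleton_iff]
      have : ((⟨j + 1, hjk⟩ : Fin (k + 1)) : ℕ) - 1 = j := rfl
      rw [this, List.getD_eq_getElem l 0 hj, hget]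
  · dsimp only
    rw [if_pos rfl]
    exact hsmall
  · intro i hi x hx y hy
    dsimp only at hx hy
    rw [if_neg hi] at hx hy
    simp only [Set.mem_preimage, Set.mem_singleton_iff] at hx hy
    exact hρ x y (hx.trans hy.symm)

/-- Theorem 3(2): if a measure-preserving action of a countable amenable group `G` with Følner
sequence `{Fₙ}` has zero amenable measure entropy (the normalized Shannon entropies of all
refined partitions `⋁_{g∈Fₙ} g⁻¹ξ` tend to `0`), then for every finite-entropy partition `ξ`
with cut semimetric `ρ_ξ` and every `ε > 0`, `ℍ_ε(X, μ, Gⁿ_av ρ_ξ) = o(|Fₙ|)`. -/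
theorem epsEntropy_littleO_of_zero_entropy {G X : Type*} [Group G] [Countable G] [DecidableEq G]
    [MeasurableSpace X] [MulAction G X]
    (μ : Measure X) [IsProbabilityMeasure μ]
    (hmp : ∀ g : G, MeasurePreserving (fun x : X => g • x) μ μ)
    (F : ℕ → Finset G) (hne : ∀ n, (F n).Nonempty)
    (hFolner : ∀ g : G,
      Tendsto (fun n => ((symmDiff (g • F n) (F n)).card : ℝ) / (F n).card) atTop (nhds 0))
    -- zero amenable measure entropy:
    (hzero : ∀ Q : X → ℕ, Measurable Q →
      Integrable (fun x => Real.logb 2 (μ (Q ⁻¹' {Q x})).toReal) μ →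
      Tendsto (fun n =>
          (-∫ x, Real.logb 2 (μ {y | ∀ g ∈ F n, Q (g • y) = Q (g • x)}).toReal ∂μ)
            / (F n).card) atTop (nhds 0))
    (P : X → ℕ) (hP : Measurable P)
    (hPent : Integrable (fun x => Real.logb 2 (μ (P ⁻¹' {P x})).toReal) μ)
    (ε : ℝ) (hε : 0 < ε) :
    Tendsto (fun n =>
        epsEntropy μ
          (fun x y => ((F n).card : ℝ)⁻¹ *
            ∑ g ∈ F n, (if P (g • x) = P (g • y) then (0 : ℝ) else 1)) ε
          / (F n).card) atTop (nhds 0) := by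
  classical
  choose T hT hTi hTa using fun n => exists_code μ hmp hP hPent (F n)
  set J : ℕ → ℝ := fun n =>
    -∫ x, Real.logb 2 (μ {y | ∀ g ∈ F n, P (g • y) = P (g • x)}).toReal ∂μ with hJdef
  have hJeq : ∀ n, ∫ x, atomInfo μ (T n) x ∂μ = J n := by
    intro n
    have hfun : (fun x => atomInfo μ (T n) x)
        = fun x => -Real.logb 2 (μ {y | ∀ g ∈ F n, P (g • y) = P (g • x)}).toReal := by
      funext x
      unfold atomInfo
      rw [hTa n x]
    rw [hfun, integral_neg]
  have hJnn : ∀ n, 0 ≤ J n := by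
    intro n
    rw [← hJeq n]
    exact integral_nonneg (atomInfo_nonneg μ (T n))
  have hJ0 : Tendsto (fun n => J n / (F n).card) atTop (nhds 0) := hzero P hP hPent
  rw [Metric.tendsto_atTop]
  intro η hη
  have hδ : 0 < ε * η / 8 := by positivity
  obtain ⟨N, hN⟩ := Metric.tendsto_atTop.1 hJ0 (ε * η / 8) hδ
  refine ⟨N, fun n hn => ?_⟩
  set ρ : X → X → ℝ := fun x y => ((F n).card : ℝ)⁻¹ *
    ∑ g ∈ F n, (if P (g • x) = P (g • y) then (0 : ℝ) else 1) with hρdef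
  set c : ℝ := ((F n).card : ℝ) with hcdef
  have hc : 0 < c := by
    rw [hcdef]
    exact_mod_cast (hne n).card_pos
  set t : ℝ := max ((2 / ε) * J n) ((η / 4) * c) with htdef
  have ht0 : 0 < t := lt_max_of_lt_right (by positivity)
  -- Markov bound
  have hmark := mul_meas_ge_le_integral_of_nonneg
    (Filter.Eventually.of_forall (atomInfo_nonneg μ (T n))) (hTi n) t
  rw [hJeq n] at hmark
  have hJt : J n / t ≤ ε / 2 := by
    rw [div_le_iff₀ ht0]
    have h1 : (2 / ε) * J n ≤ t := le_max_left _ _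
    calc J n = (ε / 2) * ((2 / ε) * J n) := by field_simp
      _ ≤ (ε / 2) * t := by
          have := hJnn n
          gcongr
      _ = ε / 2 * t := rfl
  have hmeas_le : μ {x | t ≤ atomInfo μ (T n) x} ≤ ENNReal.ofReal (ε / 2) := by
    rw [ENNReal.le_ofReal_iff_toReal_le (measure_ne_top μ _) (by positivity)]
    have htr : (μ {x | t ≤ atomInfo μ (T n) x}).toReal ≤ J n / t := by
      rw [le_div_iff₀ ht0, mul_comm]
      exact hmark
    exact htr.trans hJt
  -- small-atoms set bound
  have hsmall : μ {x | μ ((T n) ⁻¹' {T n x}) < ENNReal.ofReal ((2:ℝ) ^ (-t))}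
      < ENNReal.ofReal ε := by
    have hsub : {x | μ ((T n) ⁻¹' {T n x}) < ENNReal.ofReal ((2:ℝ) ^ (-t))}
        ⊆ {x | t ≤ atomInfo μ (T n) x} ∪ {x | μ ((T n) ⁻¹' {T n x}) = 0} := by
      intro x hx
      simp only [Set.mem_setOf_eq] at hx
      rcases eq_or_ne (μ ((T n) ⁻¹' {T n x})) 0 with h0 | h0
      · exact Or.inr h0
      · left
        have hfin : μ ((T n) ⁻¹' {T n x}) ≠ ⊤ := measure_ne_top μ _
        have hpos : 0 < (μ ((T n) ⁻¹' {T n x})).toReal := ENNReal.toReal_pos h0 hfin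
        have hlt : (μ ((T n) ⁻¹' {T n x})).toReal < (2:ℝ) ^ (-t) :=
          (ENNReal.lt_ofReal_iff_toReal_lt hfin).1 hx
        have hlog : Real.logb 2 (μ ((T n) ⁻¹' {T n x})).toReal
            < Real.logb 2 ((2:ℝ) ^ (-t)) := Real.logb_lt_logb one_lt_two hpos hlt
        rw [Real.logb_rpow (by norm_num) (by norm_num)] at hlog
        have : t ≤ -Real.logb 2 (μ ((T n) ⁻¹' {T n x})).toReal := by linarith
        exact this
    calc μ {x | μ ((T n) ⁻¹' {T n x}) < ENNReal.ofReal ((2:ℝ) ^ (-t))}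
        ≤ μ ({x | t ≤ atomInfo μ (T n) x} ∪ {x | μ ((T n) ⁻¹' {T n x}) = 0}) :=
          measure_mono hsub
      _ ≤ μ {x | t ≤ atomInfo μ (T n) x} + μ {x | μ ((T n) ⁻¹' {T n x}) = 0} :=
          measure_union_le _ _
      _ = μ {x | t ≤ atomInfo μ (T n) x} := by rw [null_atoms μ (T n) (hT n), add_zero]
      _ ≤ ENNReal.ofReal (ε / 2) := hmeas_le
      _ < ENNReal.ofReal ε := by
          rw [ENNReal.ofReal_lt_ofReal_iff hε]
          linarith
  -- zero diameter on atoms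
  have hρatom : ∀ x y : X, T n x = T n y → ρ x y < ε := by
    intro x y hxy
    have hy : y ∈ (T n) ⁻¹' {T n x} := by
      simp [Set.mem_preimage, hxy.symm]
    rw [hTa n x] at hy
    have hzero' : ρ x y = 0 := by
      rw [hρdef]
      simp only
      rw [Finset.sum_eq_zero, mul_zero]
      intro g hg
      rw [if_pos (hy g hg).symm]
    rw [hzero']
    exact hε
  obtain ⟨k, hk0, hkcov, hkle⟩ := isEntCover_of_code μ (hT n) hρatom hsmall ht0.le
  -- bound the epsilon-entropy
  have hne' : {m : ℕ | 0 < m ∧ IsEntCover μ ρ ε m}.Nonempty := ⟨k, hk0, hkcov⟩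
  set m : ℕ := sInf {m : ℕ | 0 < m ∧ IsEntCover μ ρ ε m} with hmdef
  have hmem : m ∈ {m : ℕ | 0 < m ∧ IsEntCover μ ρ ε m} := Nat.sInf_mem hne'
  have hmle : m ≤ k := Nat.sInf_le ⟨hk0, hkcov⟩
  have hment : epsEntropy μ ρ ε = Real.logb 2 (m : ℝ) := rfl
  have hent_nonneg : 0 ≤ epsEntropy μ ρ ε := by
    rw [hment]
    exact Real.logb_nonneg one_lt_two (by exact_mod_cast hmem.1)
  have hent_le : epsEntropy μ ρ ε ≤ t := by
    rw [hment]
    rw [Real.logb_le_iff_le_rpow one_lt_two (by exact_mod_cast hmem.1)]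
    calc (m : ℝ) ≤ (k : ℝ) := by exact_mod_cast hmle
      _ ≤ (2:ℝ) ^ t := hkle
  -- conclude
  have hJn : J n / c < ε * η / 8 := by
    have := hN n hn
    rw [Real.dist_eq, sub_zero, abs_of_nonneg (div_nonneg (hJnn n) hc.le)] at this
    exact this
  have htc : t / c < η := by
    rw [div_lt_iff₀ hc, htdef]
    have hJc : J n < c * (ε * η / 8) := by
      have := hJn
      rw [div_lt_iff₀ hc] at this
      linarith [this]
    apply max_lt
    · have hεinv : (2 / ε) * J n < (2 / ε) * (c * (ε * η / 8)) := by
        have h2ε : 0 < 2 / ε := by positivity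
        exact mul_lt_mul_of_pos_left hJc h2ε
      have : (2 / ε) * (c * (ε * η / 8)) = η / 4 * c := by field_simp; ring
      rw [this] at hεinv
      calc (2 / ε) * J n < η / 4 * c := hεinv
        _ < η * c := by nlinarith
    · nlinarith
  rw [Real.dist_eq, sub_zero, abs_of_nonneg (div_nonneg hent_nonneg hc.le)]
  calc epsEntropy μ ρ ε / c ≤ t / c := by gcongr
    _ < η := htc
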